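/- Let (x_n, y_n, z_n, v_n) be the orbit of the level-3 local structure map L for rule 14 started at (x_0, y_0, z_0, v_0) = (1/2, 1/4, 1/8, 1/8). Then x_n − y_n = 1/4 for all n ≥ 0, and v_n = y_n − 1/4 for all n ≥ 1. -/
import Mathlib


open Filter

/-- Level-3 local structure map for rule 14.  In Lean, division by zero
yields zero, which matches the convention that the fraction
`v(y-z)z/(y(x-y))` is taken to be `0` whenever `y(x-y) = 0`. -/
noncomputable def L (p : ℝ × ℝ × ℝ × ℝ) : ℝ × ℝ × ℝ × ℝ :=
  match p with
  | (x, y, z, v) =>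
    (-x + z + 1,
     -2 * x + y + z + 1,
     1 + z + v - 3 * x + 2 * y - v * (y - z) * z / (y * (x - y)),
     x - 2 * y + z)

lemma L_inv (p : ℝ × ℝ × ℝ × ℝ) : (L p).1 - (L p).2.1 = p.1 - p.2.1 := by
  obtain ⟨x, y, z, v⟩ := p
  simp [L]
  ring

lemma iter_inv (n : ℕ) :
    (L^[n] (1/2, 1/4, 1/8, 1/8) : ℝ × ℝ × ℝ × ℝ).1
      - (L^[n] (1/2, 1/4, 1/8, 1/8)).2.1 = 1/4 := by
  induction n with
  | zero => norm_num
  | succ m ih =>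
      rw [Function.iterate_succ_apply', L_inv]
      exact ih

theorem local_structure_invariants :
    (∀ n : ℕ,
      (L^[n] (1/2, 1/4, 1/8, 1/8)).1 - (L^[n] (1/2, 1/4, 1/8, 1/8)).2.1 = 1/4) ∧
    (∀ n : ℕ, 1 ≤ n →
      (L^[n] (1/2, 1/4, 1/8, 1/8)).2.2.2
        = (L^[n] (1/2, 1/4, 1/8, 1/8)).2.1 - 1/4) := by
  refine ⟨iter_inv, ?_⟩
  intro n hn
  obtain ⟨m, rfl⟩ := Nat.exists_eq_add_of_le hn
  rw [add_comm, Function.iterate_succ_apply']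
  have h := iter_inv m
  rcases e : (L^[m] (1/2, 1/4, 1/8, 1/8) : ℝ × ℝ × ℝ × ℝ) with ⟨x, y, z, v⟩
  rw [e] at h
  simp only [L] at h ⊢
  linarith
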